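/- Let T be a rooted binary tree of size n ≥ 5. Then T is reconstructable from its multideck: if T' is any rooted binary tree of size n with D^m(T') = D^m(T) as multisets, then T' is isomorphic to T (by a root-preserving isomorphism). -/

import Mathlib

/-- A rooted binary tree: every vertex has zero or two children. -/
inductive RBT : Type
  | leaf : RBT
  | node : RBT → RBT → RBT
deriving DecidableEq

namespace RBT

/-- Number of leaves. -/
def numLeaves : RBT → ℕ
  | leaf => 1
  | node l r => l.numLeaves + r.numLeaves

/-- Root-preserving isomorphism of rooted binary trees (children may be swapped). -/
inductive Iso : RBT → RBT → Prop
  | leaf : Iso leaf leaf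
  | node {a b c d : RBT} : Iso a c → Iso b d → Iso (node a b) (node c d)
  | swap {a b c d : RBT} : Iso a d → Iso b c → Iso (node a b) (node c d)

/-- The multideck of a tree: the multiset of induced subtrees obtained by deleting one leaf
(in every possible way) and suppressing the resulting degree-2 vertex. -/
def cards : RBT → Multiset RBT
  | leaf => 0
  | node l r =>
      (if l = leaf then {r} else l.cards.map (fun l' => node l' r)) +
      (if r = leaf then {l} else r.cards.map (fun r' => node l r'))

end RBT

namespace RBT

/-- injective encoding into ℕ -/
def enc : RBT → ℕ
  | leaf => 0
  | node l r => Nat.pair (enc l) (enc r) + 1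

theorem enc_inj : ∀ {s t : RBT}, enc s = enc t → s = t := by
  intro s
  induction s with
  | leaf => intro t h; cases t with
    | leaf => rfl
    | node c d => simp [enc] at h
  | node a b iha ihb =>
    intro t h
    cases t with
    | leaf => simp [enc] at h
    | node c d =>
      simp only [enc, Nat.add_right_cancel_iff] at h
      have h1 := congrArg Nat.unpair h
      simp [Nat.unpair_pair] at h1
      rw [iha h1.1, ihb h1.2]

/-- sort a pair -/
def sp (a b : RBT) : RBT := if enc a ≤ enc b then node a b else node b a

theorem sp_comm (a b : RBT) : sp a b = sp b a := by
  unfold sp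
  rcases le_or_gt (enc a) (enc b) with h | h
  · rcases le_or_gt (enc b) (enc a) with h2 | h2
    · have : a = b := enc_inj (le_antisymm h h2)
      simp [this]
    · simp [h, not_le.2 h2]
  · simp [not_le.2 h, h.le]

def norm : RBT → RBT
  | leaf => leaf
  | node l r => sp (norm l) (norm r)

@[simp] theorem norm_leaf : norm leaf = leaf := rfl
theorem norm_node (l r : RBT) : norm (node l r) = sp (norm l) (norm r) := rfl

theorem iso_refl (t : RBT) : Iso t t := by
  induction t with
  | leaf => exact Iso.leaf
  | node a b iha ihb => exact Iso.node iha ihb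

theorem iso_symm : ∀ {s t : RBT}, Iso s t → Iso t s := by
  intro s t h
  induction h with
  | leaf => exact Iso.leaf
  | node h1 h2 ih1 ih2 => exact Iso.node ih1 ih2
  | swap h1 h2 ih1 ih2 => exact Iso.swap ih2 ih1

theorem iso_trans : ∀ {s t u : RBT}, Iso s t → Iso t u → Iso s u := by
  intro s t u h
  induction h generalizing u with
  | leaf => exact fun h => h
  | node h1 h2 ih1 ih2 =>
    intro h3
    cases h3 with
    | node g1 g2 => exact Iso.node (ih1 g1) (ih2 g2)
    | swap g1 g2 => exact Iso.swap (ih1 g1) (ih2 g2)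
  | swap h1 h2 ih1 ih2 =>
    intro h3
    cases h3 with
    | node g1 g2 => exact Iso.swap (ih1 g2) (ih2 g1)
    | swap g1 g2 => exact Iso.node (ih1 g2) (ih2 g1)

theorem iso_norm (t : RBT) : Iso t (norm t) := by
  induction t with
  | leaf => exact Iso.leaf
  | node a b iha ihb =>
    rw [norm_node]
    unfold sp
    split
    · exact Iso.node iha ihb
    · exact Iso.swap iha ihb

theorem norm_eq_of_iso : ∀ {s t : RBT}, Iso s t → norm s = norm t := by
  intro s t h
  induction h with
  | leaf => rfl
  | node h1 h2 ih1 ih2 => rw [norm_node, norm_node, ih1, ih2]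
  | swap h1 h2 ih1 ih2 => rw [norm_node, norm_node, ih1, ih2, sp_comm]

theorem iso_of_norm_eq {s t : RBT} (h : norm s = norm t) : Iso s t :=
  iso_trans (iso_norm s) (h ▸ iso_symm (iso_norm t))

theorem iso_iff_norm_eq {s t : RBT} : Iso s t ↔ norm s = norm t :=
  ⟨norm_eq_of_iso, iso_of_norm_eq⟩

theorem norm_idem (t : RBT) : norm (norm t) = norm t :=
  norm_eq_of_iso (iso_symm (iso_norm t))

theorem numLeaves_iso : ∀ {s t : RBT}, Iso s t → numLeaves s = numLeaves t := by
  intro s t h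
  induction h with
  | leaf => rfl
  | node h1 h2 ih1 ih2 => simp [numLeaves, ih1, ih2]
  | swap h1 h2 ih1 ih2 => simp [numLeaves, ih1, ih2]; omega

theorem numLeaves_norm (t : RBT) : numLeaves (norm t) = numLeaves t :=
  (numLeaves_iso (iso_norm t)).symm

theorem numLeaves_pos (t : RBT) : 0 < numLeaves t := by
  induction t with
  | leaf => simp [numLeaves]
  | node a b iha ihb => simp [numLeaves]; omega

theorem eq_leaf_of_numLeaves_eq_one : ∀ {t : RBT}, numLeaves t = 1 → t = leaf := by
  intro t h
  cases t with
  | leaf => rfl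
  | node a b =>
    have := numLeaves_pos a
    have := numLeaves_pos b
    simp [numLeaves] at h
    omega

theorem iso_leaf : ∀ {t : RBT}, Iso t leaf → t = leaf := by
  intro t h
  cases h; rfl

end RBT

namespace RBT

theorem cards_node (l r : RBT) : cards (node l r) =
    (if l = leaf then {r} else l.cards.map (fun l' => node l' r)) +
    (if r = leaf then {l} else r.cards.map (fun r' => node l r')) := rfl

theorem card_cards : ∀ {t : RBT}, t ≠ leaf → Multiset.card (cards t) = numLeaves t := by
  intro t ht
  induction t with
  | leaf => exact absurd rfl ht
  | node a b iha ihb =>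
    rw [cards_node]
    simp only [Multiset.card_add, numLeaves]
    congr 1
    · by_cases h : a = leaf
      · simp [h, numLeaves]
      · simp [h, iha h]
    · by_cases h : b = leaf
      · simp [h, numLeaves]
      · simp [h, ihb h]

theorem numLeaves_mem_cards : ∀ {t C : RBT}, C ∈ cards t → numLeaves C + 1 = numLeaves t := by
  intro t
  induction t with
  | leaf => intro C h; simp [cards] at h
  | node a b iha ihb =>
    intro C h
    rw [cards_node, Multiset.mem_add] at h
    rcases h with h | h
    · by_cases ha : a = leaf
      · simp [ha] at h
        subst h ha
        simp [numLeaves]; omega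
      · simp [ha, Multiset.mem_map] at h
        obtain ⟨a', ha', rfl⟩ := h
        have := iha ha'
        simp [numLeaves] at *
        omega
    · by_cases hb : b = leaf
      · simp [hb] at h
        subst h hb
        simp [numLeaves]
      · simp [hb, Multiset.mem_map] at h
        obtain ⟨b', hb', rfl⟩ := h
        have := ihb hb'
        simp [numLeaves] at *
        omega

theorem rel_add' {α : Type*} {r : α → α → Prop} {s t u v : Multiset α}
    (h1 : Multiset.Rel r s v) (h2 : Multiset.Rel r t u) :
    Multiset.Rel r (s + t) (u + v) := by
  rw [add_comm u v]; exact h1.add h2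

theorem rel_sing {α : Type*} {r : α → α → Prop} {a b : α} (h : r a b) :
    Multiset.Rel r {a} {b} :=
  Multiset.Rel.cons h Multiset.Rel.zero

theorem cards_rel : ∀ {s t : RBT}, Iso s t → Multiset.Rel Iso (cards s) (cards t) := by
  intro s t h
  induction h with
  | leaf => simp [cards]
  | @node a b c d h1 h2 ih1 ih2 =>
    rw [cards_node, cards_node]
    apply Multiset.Rel.add
    · by_cases ha : a = leaf
      · have hc : c = leaf := iso_leaf (iso_trans (iso_symm h1) (ha ▸ iso_refl leaf))
        subst ha hc
        simpa using rel_sing h2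
      · have hc : c ≠ leaf := fun hc => ha (iso_leaf (hc ▸ h1))
        simp only [ha, hc, if_neg, if_false]
        rw [Multiset.rel_map]
        exact ih1.mono (fun x _ y _ hxy => Iso.node hxy h2)
    · by_cases hb : b = leaf
      · have hd : d = leaf := iso_leaf (iso_trans (iso_symm h2) (hb ▸ iso_refl leaf))
        subst hb hd
        simpa using rel_sing h1
      · have hd : d ≠ leaf := fun hd => hb (iso_leaf (hd ▸ h2))
        simp only [hb, hd, if_neg, if_false]
        rw [Multiset.rel_map]
        exact ih2.mono (fun x _ y _ hxy => Iso.node h1 hxy)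
  | @swap a b c d h1 h2 ih1 ih2 =>
    rw [cards_node, cards_node]
    apply rel_add'
    · by_cases ha : a = leaf
      · have hd : d = leaf := iso_leaf (iso_trans (iso_symm h1) (ha ▸ iso_refl leaf))
        subst ha hd
        simpa using rel_sing h2
      · have hd : d ≠ leaf := fun hd => ha (iso_leaf (hd ▸ h1))
        simp only [ha, hd, if_neg, if_false]
        rw [Multiset.rel_map]
        exact ih1.mono (fun x _ y _ hxy => Iso.swap hxy h2)
    · by_cases hb : b = leaf
      · have hc : c = leaf := iso_leaf (iso_trans (iso_symm h2) (hb ▸ iso_refl leaf))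
        subst hb hc
        simpa using rel_sing h1
      · have hc : c ≠ leaf := fun hc => hb (iso_leaf (hc ▸ h2))
        simp only [hb, hc, if_neg, if_false]
        rw [Multiset.rel_map]
        exact ih2.mono (fun x _ y _ hxy => Iso.swap h1 hxy)

theorem map_norm_eq_of_rel : ∀ {M N : Multiset RBT}, Multiset.Rel Iso M N →
    M.map norm = N.map norm := by
  intro M N h
  induction h with
  | zero => rfl
  | cons hab h ih => simp [norm_eq_of_iso hab, ih]

/-- the normalized deck -/
def Dn (t : RBT) : Multiset RBT := (cards t).map norm

theorem Dn_iso {s t : RBT} (h : Iso s t) : Dn s = Dn t :=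
  map_norm_eq_of_rel (cards_rel h)

end RBT

namespace RBT

/-- total leaf depth (external path length) -/
def E : RBT → ℕ
  | leaf => 0
  | node l r => E l + E r + numLeaves l + numLeaves r

theorem E_iso : ∀ {s t : RBT}, Iso s t → E s = E t := by
  intro s t h
  induction h with
  | leaf => rfl
  | @node a b c d h1 h2 ih1 ih2 =>
    simp only [E, ih1, ih2, numLeaves_iso h1, numLeaves_iso h2]
  | @swap a b c d h1 h2 ih1 ih2 =>
    simp only [E, ih1, ih2, numLeaves_iso h1, numLeaves_iso h2]
    omega

/-- Key depth lemma: every card has E at least `E A - numLeaves A`, with equality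
only for near-caterpillar deletions, in which case `A ≅ node C leaf`. -/
theorem E_card : ∀ {A C : RBT}, C ∈ cards A →
    E A ≤ E C + numLeaves A ∧ (E A = E C + numLeaves A → Iso A (node C leaf)) := by
  intro A
  induction A with
  | leaf => intro C h; simp [cards] at h
  | node X Y ihX ihY =>
    intro C h
    rw [cards_node, Multiset.mem_add] at h
    rcases h with h | h
    · by_cases hX : X = leaf
      · simp [hX] at h
        subst h hX
        constructor
        · simp [E, numLeaves]; omega
        · intro _
          exact Iso.swap Iso.leaf (iso_refl C)
      · simp [hX, Multiset.mem_map] at h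
        obtain ⟨X', hX', rfl⟩ := h
        obtain ⟨ih1, ih2⟩ := ihX hX'
        have hsz := numLeaves_mem_cards hX'
        have hYpos := numLeaves_pos Y
        constructor
        · simp only [E, numLeaves]
          omega
        · intro heq
          simp only [E, numLeaves] at heq
          have hY1 : numLeaves Y = 1 := by omega
          have hEX : E X = E X' + numLeaves X := by omega
          have hYleaf : Y = leaf := eq_leaf_of_numLeaves_eq_one hY1
          subst hYleaf
          exact Iso.node (ih2 hEX) Iso.leaf
    · by_cases hY : Y = leaf
      · simp [hY] at h
        subst h hY
        constructor
        · simp [E, numLeaves]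
        · intro _
          exact iso_refl _
      · simp [hY, Multiset.mem_map] at h
        obtain ⟨Y', hY', rfl⟩ := h
        obtain ⟨ih1, ih2⟩ := ihY hY'
        have hsz := numLeaves_mem_cards hY'
        have hXpos := numLeaves_pos X
        constructor
        · simp only [E, numLeaves]
          omega
        · intro heq
          simp only [E, numLeaves] at heq
          have hX1 : numLeaves X = 1 := by omega
          have hEY : E Y = E Y' + numLeaves Y := by omega
          have hXleaf : X = leaf := eq_leaf_of_numLeaves_eq_one hX1
          subst hXleaf
          have h1 : Iso Y (node Y' leaf) := ih2 hEY
          have h2 : Iso Y (node leaf Y') :=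
            iso_trans h1 (Iso.swap (iso_refl Y') Iso.leaf)
          exact Iso.swap Iso.leaf h2

/-- children of the root, as a multiset -/
def childrenM : RBT → Multiset RBT
  | leaf => 0
  | node l r => {l, r}

/-- larger root-subtree size -/
def maxc : RBT → ℕ
  | leaf => 0
  | node l r => max (numLeaves l) (numLeaves r)

theorem norm_node_cases (X Y : RBT) :
    norm (node X Y) = node (norm X) (norm Y) ∨ norm (node X Y) = node (norm Y) (norm X) := by
  rw [norm_node]
  unfold sp
  split
  · exact Or.inl rfl
  · exact Or.inr rfl

theorem childrenM_norm (X Y : RBT) :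
    childrenM (norm (node X Y)) = {norm X, norm Y} := by
  rcases norm_node_cases X Y with h | h <;> rw [h]
  · rfl
  · exact Multiset.pair_comm _ _

theorem maxc_norm (X Y : RBT) :
    maxc (norm (node X Y)) = max (numLeaves X) (numLeaves Y) := by
  rcases norm_node_cases X Y with h | h <;> rw [h] <;>
    simp [maxc, numLeaves_norm] <;> omega

theorem norm_eq_leaf_iff {X : RBT} : norm X = leaf ↔ X = leaf := by
  constructor
  · intro h
    exact iso_leaf (iso_of_norm_eq (by simp [h]))
  · rintro rfl; rfl

theorem numLeaves_node (l r : RBT) : numLeaves (node l r) = numLeaves l + numLeaves r := rfl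

theorem ne_leaf_of_numLeaves {t : RBT} {k : ℕ} (h : numLeaves t = k) (hk : 2 ≤ k) :
    t ≠ leaf := by
  rintro rfl
  simp [numLeaves] at h
  omega

/-- the "leaf child together with a big child" counting predicate -/
def isLB (m : ℕ) : RBT → Prop
  | leaf => False
  | node X Y => (X = leaf ∧ numLeaves Y = m) ∨ (Y = leaf ∧ numLeaves X = m)

instance (m : ℕ) : DecidablePred (isLB m) := by
  intro t
  cases t with
  | leaf => exact isFalse (fun h => h)
  | node X Y => exact inferInstanceAs (Decidable (_ ∨ _))

theorem isLB_norm_node (m : ℕ) (X Y : RBT) :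
    isLB m (norm (node X Y)) ↔
      ((X = leaf ∧ numLeaves Y = m) ∨ (Y = leaf ∧ numLeaves X = m)) := by
  rcases norm_node_cases X Y with h | h <;> rw [h] <;>
    simp [isLB, norm_eq_leaf_iff, numLeaves_norm] <;> tauto

end RBT

namespace RBT

/-- "has a leaf child" -/
def isL : RBT → Prop
  | leaf => False
  | node X Y => X = leaf ∨ Y = leaf

instance : DecidablePred isL := by
  intro t
  cases t with
  | leaf => exact isFalse (fun h => h)
  | node X Y => exact inferInstanceAs (Decidable (_ ∨ _))

theorem isL_norm_node (X Y : RBT) :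
    isL (norm (node X Y)) ↔ (X = leaf ∨ Y = leaf) := by
  rcases norm_node_cases X Y with h | h <;> rw [h] <;>
    simp [isL, norm_eq_leaf_iff] <;> tauto

/-- "has a child with k leaves" -/
def hasCS (k : ℕ) : RBT → Prop
  | leaf => False
  | node X Y => numLeaves X = k ∨ numLeaves Y = k

instance (k : ℕ) : DecidablePred (hasCS k) := by
  intro t
  cases t with
  | leaf => exact isFalse (fun h => h)
  | node X Y => exact inferInstanceAs (Decidable (_ ∨ _))

theorem hasCS_norm_node (k : ℕ) (X Y : RBT) :
    hasCS k (norm (node X Y)) ↔ (numLeaves X = k ∨ numLeaves Y = k) := by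
  rcases norm_node_cases X Y with h | h <;> rw [h] <;>
    simp [hasCS, numLeaves_norm] <;> tauto

theorem Dn_node_node {A B : RBT} (hA : A ≠ leaf) (hB : B ≠ leaf) :
    Dn (node A B) = (cards A).map (fun A' => norm (node A' B)) +
      (cards B).map (fun B' => norm (node A B')) := by
  rw [Dn, cards_node, if_neg hA, if_neg hB, Multiset.map_add,
    Multiset.map_map, Multiset.map_map]
  rfl

theorem Dn_node_leaf {A : RBT} (hA : A ≠ leaf) :
    Dn (node A leaf) = (cards A).map (fun A' => norm (node A' leaf)) + {norm A} := by
  rw [Dn, cards_node, if_neg hA, if_pos rfl, Multiset.map_add, Multiset.map_map,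
    Multiset.map_singleton]
  rfl

theorem bind_pair_l {α : Type*} (s : Multiset α) (f : α → RBT) (c : RBT) :
    (s.bind fun x => ({f x, c} : Multiset RBT)) = s.map f + Multiset.replicate s.card c := by
  have : ∀ x, ({f x, c} : Multiset RBT) = {f x} + {c} := fun x => rfl
  simp only [this, Multiset.bind_add, Multiset.bind_singleton, Multiset.map_const']

theorem bind_pair_r {α : Type*} (s : Multiset α) (f : α → RBT) (c : RBT) :
    (s.bind fun x => ({c, f x} : Multiset RBT)) = Multiset.replicate s.card c + s.map f := by
  have : ∀ x, ({c, f x} : Multiset RBT) = {c} + {f x} := fun x => rfl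
  simp only [this, Multiset.bind_add, Multiset.bind_singleton, Multiset.map_const']

theorem bind_Dn {A B : RBT} (hA : A ≠ leaf) (hB : B ≠ leaf) :
    (Dn (node A B)).bind childrenM =
      ((cards A).map norm + Multiset.replicate (numLeaves A) (norm B)) +
      (Multiset.replicate (numLeaves B) (norm A) + (cards B).map norm) := by
  rw [Dn_node_node hA hB, Multiset.add_bind, Multiset.bind_map, Multiset.bind_map]
  simp only [Function.comp, childrenM_norm]
  rw [bind_pair_l A.cards norm B.norm, bind_pair_r B.cards norm A.norm,
    card_cards hA, card_cards hB]

theorem mem_map_norm_cards {A C : RBT} (h : C ∈ (cards A).map norm) :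
    numLeaves C + 1 = numLeaves A := by
  rw [Multiset.mem_map] at h
  obtain ⟨A', hA', rfl⟩ := h
  rw [numLeaves_norm]
  exact numLeaves_mem_cards hA'

theorem numLeaves_mem_replicate {k : ℕ} {c C : RBT} (h : C ∈ Multiset.replicate k c) :
    numLeaves C = numLeaves c := by
  rw [Multiset.mem_replicate] at h
  rw [h.2]

/-- The filtered children multiset, case `|B| < |A|`. -/
theorem Mbig_lt {A B : RBT} (hA : A ≠ leaf) (hB : B ≠ leaf)
    (hlt : numLeaves B < numLeaves A) :
    ((Dn (node A B)).bind childrenM).filter (fun C => numLeaves C = numLeaves A) =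
      Multiset.replicate (numLeaves B) (norm A) := by
  rw [bind_Dn hA hB]
  simp only [Multiset.filter_add]
  have hposB := numLeaves_pos B
  have e1 : ((cards A).map norm).filter (fun C => numLeaves C = numLeaves A) = 0 :=
    Multiset.filter_eq_nil.mpr (fun C hC => by have := mem_map_norm_cards hC; omega)
  have e2 : (Multiset.replicate (numLeaves A) (norm B)).filter
      (fun C => numLeaves C = numLeaves A) = 0 :=
    Multiset.filter_eq_nil.mpr (fun C hC => by
      have := numLeaves_mem_replicate hC; rw [numLeaves_norm] at this; omega)
  have e3 : (Multiset.replicate (numLeaves B) (norm A)).filter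
      (fun C => numLeaves C = numLeaves A) = Multiset.replicate (numLeaves B) (norm A) :=
    Multiset.filter_eq_self.mpr (fun C hC => by
      have := numLeaves_mem_replicate hC; rw [numLeaves_norm] at this; omega)
  have e4 : ((cards B).map norm).filter (fun C => numLeaves C = numLeaves A) = 0 :=
    Multiset.filter_eq_nil.mpr (fun C hC => by have := mem_map_norm_cards hC; omega)
  rw [e1, e2, e3, e4]
  simp

/-- The filtered children multiset, case `|B| = |A|`. -/
theorem Mbig_eq {A B : RBT} (hA : A ≠ leaf) (hB : B ≠ leaf)
    (heq : numLeaves B = numLeaves A) :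
    ((Dn (node A B)).bind childrenM).filter (fun C => numLeaves C = numLeaves A) =
      Multiset.replicate (numLeaves A) (norm B) + Multiset.replicate (numLeaves A) (norm A) := by
  rw [bind_Dn hA hB]
  simp only [Multiset.filter_add]
  have hposA := numLeaves_pos A
  have hposB := numLeaves_pos B
  have e1 : ((cards A).map norm).filter (fun C => numLeaves C = numLeaves A) = 0 :=
    Multiset.filter_eq_nil.mpr (fun C hC => by have := mem_map_norm_cards hC; omega)
  have e2 : (Multiset.replicate (numLeaves A) (norm B)).filter
      (fun C => numLeaves C = numLeaves A) = Multiset.replicate (numLeaves A) (norm B) :=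
    Multiset.filter_eq_self.mpr (fun C hC => by
      have := numLeaves_mem_replicate hC; rw [numLeaves_norm] at this; omega)
  have e3 : (Multiset.replicate (numLeaves B) (norm A)).filter
      (fun C => numLeaves C = numLeaves A) = Multiset.replicate (numLeaves B) (norm A) :=
    Multiset.filter_eq_self.mpr (fun C hC => by
      have := numLeaves_mem_replicate hC; rw [numLeaves_norm] at this; omega)
  have e4 : ((cards B).map norm).filter (fun C => numLeaves C = numLeaves A) = 0 :=
    Multiset.filter_eq_nil.mpr (fun C hC => by have := mem_map_norm_cards hC; omega)
  rw [e1, e2, e3, e4, heq]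
  simp

/-- The "small side deck" multiset, case `|B| < |A|`. -/
theorem Nsmall {A B : RBT} (hA : A ≠ leaf) (hB : B ≠ leaf)
    (hlt : numLeaves B < numLeaves A) :
    ((Dn (node A B)).filter (fun C => ¬ hasCS (numLeaves A) C)).bind childrenM =
      (cards A).map norm + Multiset.replicate (numLeaves A) (norm B) := by
  rw [Dn_node_node hA hB, Multiset.filter_add]
  rw [Multiset.filter_eq_self.mpr, Multiset.filter_eq_nil.mpr]
  · rw [add_zero, Multiset.bind_map]
    simp only [Function.comp, childrenM_norm]
    rw [bind_pair_l A.cards norm B.norm, card_cards hA]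
  · intro C hC
    rw [Multiset.mem_map] at hC
    obtain ⟨B', hB', rfl⟩ := hC
    rw [not_not, hasCS_norm_node]
    left; rfl
  · intro C hC
    rw [Multiset.mem_map] at hC
    obtain ⟨A', hA', rfl⟩ := hC
    rw [hasCS_norm_node]
    push_neg
    have h1 := numLeaves_mem_cards hA'
    exact ⟨by omega, by omega⟩

end RBT

namespace RBT

theorem two_le_numLeaves {t : RBT} (h : t ≠ leaf) : 2 ≤ numLeaves t := by
  cases t with
  | leaf => exact absurd rfl h
  | node l r =>
    have := numLeaves_pos l
    have := numLeaves_pos r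
    rw [numLeaves_node]
    omega

theorem countL_b1 {A : RBT} (hA : A ≠ leaf) :
    numLeaves A ≤ Multiset.countP isL (Dn (node A leaf)) := by
  rw [Dn_node_leaf hA, Multiset.countP_add, Multiset.countP_map]
  have h1 : Multiset.filter (fun a => isL (norm (node a leaf))) (cards A) = cards A :=
    Multiset.filter_eq_self.mpr (fun A' _ => (isL_norm_node A' leaf).mpr (Or.inr rfl))
  rw [h1, card_cards hA]
  omega

theorem countL_b2 {A B : RBT} (hA : A ≠ leaf) (hB : B ≠ leaf)
    (h3 : 3 ≤ numLeaves A) :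
    Multiset.countP isL (Dn (node A B)) ≤ 2 := by
  rw [Dn_node_node hA hB, Multiset.countP_add, Multiset.countP_map, Multiset.countP_map]
  have h1 : Multiset.filter (fun a => isL (norm (node a B))) (cards A) = 0 := by
    rw [Multiset.filter_eq_nil]
    intro A' hA'
    rw [isL_norm_node]
    rintro (rfl | rfl)
    · have := numLeaves_mem_cards hA'
      simp [numLeaves] at this
      omega
    · exact hB rfl
  rw [h1]
  simp only [Multiset.card_zero, zero_add]
  by_cases h2 : numLeaves B = 2
  · calc Multiset.card (Multiset.filter (fun a => isL (norm (node A a))) (cards B))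
        ≤ Multiset.card (cards B) := Multiset.card_le_card (Multiset.filter_le _ _)
      _ = 2 := by rw [card_cards hB, h2]
  · have hB2 := two_le_numLeaves hB
    have h1' : Multiset.filter (fun a => isL (norm (node A a))) (cards B) = 0 := by
      rw [Multiset.filter_eq_nil]
      intro B' hB'
      rw [isL_norm_node]
      rintro (rfl | rfl)
      · exact hA rfl
      · have := numLeaves_mem_cards hB'
        simp [numLeaves] at this
        omega
    rw [h1']
    simp

theorem sup_maxc {A B : RBT} (hA : A ≠ leaf) (hB : B ≠ leaf)
    (hle : numLeaves B ≤ numLeaves A) :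
    ((Dn (node A B)).map maxc).sup = numLeaves A := by
  apply le_antisymm
  · rw [Multiset.sup_le]
    intro v hv
    rw [Multiset.mem_map] at hv
    obtain ⟨C, hC, rfl⟩ := hv
    rw [Dn_node_node hA hB, Multiset.mem_add] at hC
    rcases hC with hC | hC <;> rw [Multiset.mem_map] at hC
    · obtain ⟨A', hA', rfl⟩ := hC
      rw [maxc_norm]
      have := numLeaves_mem_cards hA'
      exact max_le (by omega) (by omega)
    · obtain ⟨B', hB', rfl⟩ := hC
      rw [maxc_norm]
      have := numLeaves_mem_cards hB'
      exact max_le (by omega) (by omega)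
  · have hcard : 0 < Multiset.card (cards B) := by
      rw [card_cards hB]; exact numLeaves_pos B
    obtain ⟨B', hB'⟩ := Multiset.card_pos_iff_exists_mem.mp hcard
    apply Multiset.le_sup
    rw [Multiset.mem_map]
    refine ⟨norm (node A B'), ?_, ?_⟩
    · rw [Dn_node_node hA hB, Multiset.mem_add]
      exact Or.inr (Multiset.mem_map_of_mem _ hB')
    · rw [maxc_norm]
      have := numLeaves_mem_cards hB'
      exact max_eq_left (by omega)

theorem pair_of_rep {k : ℕ} {x y z w : RBT} (hk : k ≠ 0)
    (h : Multiset.replicate k x + Multiset.replicate k y =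
         Multiset.replicate k z + Multiset.replicate k w) :
    ({x, y} : Multiset RBT) = ({z, w} : Multiset RBT) := by
  rw [Multiset.ext] at h ⊢
  intro c
  have hc := h c
  simp only [Multiset.count_add, Multiset.count_replicate] at hc
  have key : ∀ u : RBT, (if u = c then k else 0) = k * Multiset.count c ({u} : Multiset RBT) := by
    intro u
    rw [Multiset.count_singleton]
    by_cases hu : u = c
    · simp [hu]
    · simp [hu, Ne.symm hu]
  rw [key x, key y, key z, key w, ← Nat.mul_add, ← Nat.mul_add] at hc
  have hc2 := Nat.eq_of_mul_eq_mul_left (Nat.pos_of_ne_zero hk) hc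
  have e : ∀ u v : RBT, ({u, v} : Multiset RBT) = {u} + {v} := fun u v => rfl
  rw [e x y, e z w, Multiset.count_add, Multiset.count_add]
  exact hc2

theorem sp_of_pair_eq {x y z w : RBT} (h : ({x, y} : Multiset RBT) = ({z, w} : Multiset RBT)) :
    sp x y = sp z w := by
  have hz : z ∈ ({x, y} : Multiset RBT) := by
    rw [h]; exact Multiset.mem_cons_self _ _
  rw [Multiset.insert_eq_cons, Multiset.mem_cons, Multiset.mem_singleton] at hz
  rcases hz with rfl | rfl
  · have : y = w := by
      rw [Multiset.insert_eq_cons, Multiset.insert_eq_cons,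
        Multiset.cons_inj_right, Multiset.singleton_inj] at h
      exact h
    rw [this]
  · rw [Multiset.pair_comm x z] at h
    have : x = w := by
      rw [Multiset.insert_eq_cons, Multiset.insert_eq_cons,
        Multiset.cons_inj_right, Multiset.singleton_inj] at h
      exact h
    rw [this, sp_comm]

end RBT

namespace RBT

theorem Dn_swap (X Y : RBT) : Dn (node X Y) = Dn (node Y X) :=
  Dn_iso (Iso.swap (iso_refl X) (iso_refl Y))

theorem norm_swap (X Y : RBT) : norm (node X Y) = norm (node Y X) := by
  rw [norm_node, norm_node, sp_comm]

theorem main_lemma {n : ℕ} (hn : 5 ≤ n) {A B A' B' : RBT}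
    (hord : numLeaves B ≤ numLeaves A) (hord' : numLeaves B' ≤ numLeaves A')
    (hsum : numLeaves A + numLeaves B = n) (hsum' : numLeaves A' + numLeaves B' = n)
    (h : Dn (node A B) = Dn (node A' B')) :
    norm (node A B) = norm (node A' B') := by
  have hBpos := numLeaves_pos B
  have hB'pos := numLeaves_pos B'
  have hA3 : 3 ≤ numLeaves A := by omega
  have hA'3 : 3 ≤ numLeaves A' := by omega
  have hAne : A ≠ leaf := by
    rintro rfl; simp [numLeaves] at hA3
  have hA'ne : A' ≠ leaf := by
    rintro rfl; simp [numLeaves] at hA'3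
  by_cases hb1 : numLeaves B = 1
  · -- smaller side is a single leaf
    have hB : B = leaf := eq_leaf_of_numLeaves_eq_one hb1
    have hb'1 : numLeaves B' = 1 := by
      by_contra hne
      have hB'ne : B' ≠ leaf := by rintro rfl; exact hne rfl
      have c1 := countL_b1 hAne
      have c2 := countL_b2 hA'ne hB'ne hA'3
      rw [hB] at h
      rw [← h] at c2
      omega
    have hB' : B' = leaf := eq_leaf_of_numLeaves_eq_one hb'1
    subst hB hB'
    have hsz : numLeaves A = numLeaves A' := by omega
    have hmemA : norm A ∈ Dn (node A' leaf) := by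
      rw [← h, Dn_node_leaf hAne]
      exact Multiset.mem_add.mpr (Or.inr (Multiset.mem_singleton_self _))
    rw [Dn_node_leaf hA'ne, Multiset.mem_add] at hmemA
    rcases hmemA with hmem | hmem
    · rw [Multiset.mem_map] at hmem
      obtain ⟨A'', hA'', heq1⟩ := hmem
      have hmemA' : norm A' ∈ Dn (node A leaf) := by
        rw [h, Dn_node_leaf hA'ne]
        exact Multiset.mem_add.mpr (Or.inr (Multiset.mem_singleton_self _))
      rw [Dn_node_leaf hAne, Multiset.mem_add] at hmemA'
      rcases hmemA' with hmem' | hmem'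
      · rw [Multiset.mem_map] at hmem'
        obtain ⟨A₂, hA₂, heq2⟩ := hmem'
        -- E computations
        have iso1 : Iso A (node A'' leaf) := iso_symm (iso_of_norm_eq heq1)
        have iso2 : Iso A' (node A₂ leaf) := iso_symm (iso_of_norm_eq heq2)
        have e1 : E A = E A'' + numLeaves A'' + 1 := by
          have := E_iso iso1
          simp [E, numLeaves] at this
          omega
        have e2 : E A' = E A₂ + numLeaves A₂ + 1 := by
          have := E_iso iso2
          simp [E, numLeaves] at this
          omega
        have s1 := numLeaves_mem_cards hA''
        have s2 := numLeaves_mem_cards hA₂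
        have i1 := (E_card hA'').1
        have i2 := (E_card hA₂).1
        have hEeq : E A' = E A'' + numLeaves A' := by omega
        have iso3 : Iso A' (node A'' leaf) := (E_card hA'').2 hEeq
        have : norm A' = norm A := by
          rw [norm_eq_of_iso iso3, heq1]
        rw [norm_node, norm_node, this]
      · rw [Multiset.mem_singleton] at hmem'
        rw [norm_node, norm_node, hmem']
    · rw [Multiset.mem_singleton] at hmem
      rw [norm_node, norm_node, hmem]
  · -- smaller side has at least two leaves
    have hBne : B ≠ leaf := by rintro rfl; exact hb1 rfl
    have hb'2 : 2 ≤ numLeaves B' := by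
      by_contra hne
      have hb'1 : numLeaves B' = 1 := by omega
      have hB' : B' = leaf := eq_leaf_of_numLeaves_eq_one hb'1
      have c1 := countL_b1 hA'ne
      have c2 := countL_b2 hAne hBne hA3
      rw [hB'] at h
      rw [h] at c2
      omega
    have hB'ne : B' ≠ leaf := by rintro rfl; simp [numLeaves] at hb'2
    -- recover the size of the big side
    have haa : numLeaves A = numLeaves A' := by
      have g1 := sup_maxc hAne hBne hord
      have g2 := sup_maxc hA'ne hB'ne hord'
      rw [h] at g1
      rw [g1] at g2
      exact g2
    have hbb : numLeaves B = numLeaves B' := by omega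
    by_cases heqab : numLeaves B = numLeaves A
    · -- balanced root
      have m1 := Mbig_eq hAne hBne heqab
      have m2 := Mbig_eq hA'ne hB'ne (by omega)
      rw [← haa] at m2
      rw [h] at m1
      rw [m2] at m1
      have hpair := pair_of_rep (by omega) m1
      have := sp_of_pair_eq hpair
      rw [norm_node, norm_node, sp_comm (norm A) (norm B), sp_comm (norm A') (norm B')]
      exact this.symm
    · -- unbalanced root
      have hlt : numLeaves B < numLeaves A := lt_of_le_of_ne hord heqab
      have hlt' : numLeaves B' < numLeaves A' := by omega
      have m1 := Mbig_lt hAne hBne hlt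
      have m2 := Mbig_lt hA'ne hB'ne hlt'
      rw [← haa, ← hbb] at m2
      rw [h] at m1
      rw [m2] at m1
      have hBne0 : numLeaves B ≠ 0 := by omega
      have hnA : norm A = norm A' :=
        ((Multiset.replicate_right_inj hBne0).mp m1).symm
      have n1 := Nsmall hAne hBne hlt
      have n2 := Nsmall hA'ne hB'ne hlt'
      rw [← haa] at n2
      rw [h] at n1
      rw [n2] at n1
      have hDA : (cards A).map norm = (cards A').map norm :=
        Dn_iso (iso_of_norm_eq hnA)
      rw [hDA] at n1
      have hrep : Multiset.replicate (numLeaves A) (norm B') =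
          Multiset.replicate (numLeaves A) (norm B) := by
        exact (add_right_inj _).mp n1
      have hAne0 : numLeaves A ≠ 0 := by omega
      have hnB : norm B = norm B' :=
        ((Multiset.replicate_right_inj hAne0).mp hrep).symm
      rw [norm_node, norm_node, hnA, hnB]

theorem main_lemma' {n : ℕ} (hn : 5 ≤ n) {A B A' B' : RBT}
    (hsum : numLeaves A + numLeaves B = n) (hsum' : numLeaves A' + numLeaves B' = n)
    (h : Dn (node A B) = Dn (node A' B')) :
    norm (node A B) = norm (node A' B') := by
  rcases le_total (numLeaves B) (numLeaves A) with h1 | h1 <;>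
    rcases le_total (numLeaves B') (numLeaves A') with h2 | h2
  · exact main_lemma hn h1 h2 hsum hsum' h
  · rw [norm_swap A' B']
    exact main_lemma hn h1 h2 hsum (by omega) (by rw [h]; exact Dn_swap A' B')
  · rw [norm_swap A B]
    exact main_lemma hn h1 h2 (by omega) hsum' ((Dn_swap A B).symm.trans h)
  · rw [norm_swap A B, norm_swap A' B']
    exact main_lemma hn h1 h2 (by omega) (by omega)
      (((Dn_swap A B).symm.trans h).trans (Dn_swap A' B'))

end RBT


/-- Trees of size n ≥ 5 are reconstructable from their multidecks: if two trees
of size n ≥ 5 have equal multidecks (as multisets of isomorphism classes), they are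
isomorphic. -/
theorem tree_reconstruction (n : ℕ) (hn : 5 ≤ n) (t t' : RBT)
    (ht : t.numLeaves = n) (ht' : t'.numLeaves = n)
    (h : Multiset.Rel RBT.Iso t'.cards t.cards) :
    RBT.Iso t' t := by
  have hD : RBT.Dn t' = RBT.Dn t := RBT.map_norm_eq_of_rel h
  apply RBT.iso_of_norm_eq
  cases t with
  | leaf => simp [RBT.numLeaves] at ht; omega
  | node A B =>
    cases t' with
    | leaf => simp [RBT.numLeaves] at ht'; omega
    | node A' B' =>
      rw [RBT.numLeaves_node] at ht ht'
      exact RBT.main_lemma' hn ht' ht hD
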